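/- Let k be a field of characteristic zero and (R,Δ) a commutative differential k-algebra with R a finitely generated (affine) k-algebra. Then the rule π_m(M) = (M:Δ) defines a continuous surjection π_m : max R → Δ-prim R. If, in addition, every Δ-primitive ideal of R is a locally closed point of Δ-spec R, then the Zariski topology on Δ-prim R equals the quotient topology induced by π_m: a subset W ⊆ Δ-prim R is closed if and only if π_m^{-1}(W) is closed in max R. -/

import Mathlib

section Defs

variable {k R : Type*} [CommRing k] [CommRing R] [Algebra k R]

/-- An ideal stable under all derivations in `Δ`. -/
def IsDeltaIdeal (Δ : Set (Derivation k R R)) (I : Ideal R) : Prop :=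
  ∀ δ ∈ Δ, ∀ x ∈ I, δ x ∈ I

/-- The `Δ`-core of an ideal `J`: the largest `Δ`-stable ideal contained in `J`. -/
def deltaCore (Δ : Set (Derivation k R R)) (J : Ideal R) : Ideal R :=
  sSup {I : Ideal R | IsDeltaIdeal Δ I ∧ I ≤ J}

/-- A `Δ`-prime ideal: a proper `Δ`-ideal `Q` such that whenever a product of two
`Δ`-ideals lies in `Q`, one of them lies in `Q`. -/
def IsDeltaPrime (Δ : Set (Derivation k R R)) (Q : Ideal R) : Prop :=
  Q ≠ ⊤ ∧ IsDeltaIdeal Δ Q ∧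
    ∀ I J : Ideal R, IsDeltaIdeal Δ I → IsDeltaIdeal Δ J → I * J ≤ Q → I ≤ Q ∨ J ≤ Q

/-- A `Δ`-primitive ideal: the `Δ`-core of a maximal ideal. -/
def IsDeltaPrimitive (Δ : Set (Derivation k R R)) (P : Ideal R) : Prop :=
  ∃ M : Ideal R, M.IsMaximal ∧ deltaCore Δ M = P

end Defs

section Aux

variable {k R : Type*} [CommRing k] [CommRing R] [Algebra k R]
variable (Δ : Set (Derivation k R R))

namespace DeltaAux

lemma bot_delta : IsDeltaIdeal Δ (⊥ : Ideal R) := by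
  intro δ _ x hx
  rw [Ideal.mem_bot] at hx ⊢
  rw [hx, map_zero]

lemma top_delta : IsDeltaIdeal Δ (⊤ : Ideal R) := fun _ _ _ _ => trivial

lemma sup_delta {I J : Ideal R} (hI : IsDeltaIdeal Δ I) (hJ : IsDeltaIdeal Δ J) :
    IsDeltaIdeal Δ (I ⊔ J) := by
  intro δ hδ x hx
  rcases Submodule.mem_sup.1 hx with ⟨a, ha, b, hb, rfl⟩
  rw [map_add]
  exact Submodule.mem_sup.2 ⟨δ a, hI δ hδ a ha, δ b, hJ δ hδ b hb, rfl⟩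

lemma mul_delta {I J : Ideal R} (hI : IsDeltaIdeal Δ I) (hJ : IsDeltaIdeal Δ J) :
    IsDeltaIdeal Δ (I * J) := by
  intro δ hδ x hx
  refine Submodule.mul_induction_on hx ?_ ?_
  · intro m hm n hn
    rw [Derivation.leibniz, smul_eq_mul, smul_eq_mul]
    exact Ideal.add_mem _ (Ideal.mul_mem_mul hm (hJ δ hδ n hn))
      (mul_comm n (δ m) ▸ Ideal.mul_mem_mul (hI δ hδ m hm) hn)
  · intro a b ha hb
    rw [map_add]
    exact Ideal.add_mem _ ha hb

lemma pow_delta {A : Ideal R} (hA : IsDeltaIdeal Δ A) (n : ℕ) :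
    IsDeltaIdeal Δ (A ^ n) := by
  induction n with
  | zero => rw [pow_zero, Ideal.one_eq_top]; exact top_delta Δ
  | succ n ih => rw [pow_succ]; exact mul_delta Δ ih hA

lemma sInf_delta {S : Set (Ideal R)} (h : ∀ I ∈ S, IsDeltaIdeal Δ I) :
    IsDeltaIdeal Δ (sInf S) := by
  intro δ hδ x hx
  rw [Submodule.mem_sInf] at hx ⊢
  intro J hJ
  exact h J hJ δ hδ x (hx J hJ)

lemma deltaCore_le (J : Ideal R) : deltaCore Δ J ≤ J :=
  sSup_le fun _ hI => hI.2

lemma le_deltaCore {I J : Ideal R} (h1 : IsDeltaIdeal Δ I) (h2 : I ≤ J) :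
    I ≤ deltaCore Δ J := le_sSup ⟨h1, h2⟩

lemma deltaCore_delta (J : Ideal R) : IsDeltaIdeal Δ (deltaCore Δ J) := by
  intro δ hδ x hx
  have hne : ({I : Ideal R | IsDeltaIdeal Δ I ∧ I ≤ J}).Nonempty :=
    ⟨⊥, bot_delta Δ, bot_le⟩
  have hdir : DirectedOn (· ≤ ·) {I : Ideal R | IsDeltaIdeal Δ I ∧ I ≤ J} := by
    rintro a ha b hb
    exact ⟨a ⊔ b, ⟨sup_delta Δ ha.1 hb.1, sup_le ha.2 hb.2⟩, le_sup_left, le_sup_right⟩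
  obtain ⟨I, hI, hxI⟩ := (Submodule.mem_sSup_of_directed hne hdir).1 hx
  exact le_sSup hI (hI.1 δ hδ x hxI)

/-- The smallest `Δ`-ideal containing `I`. -/
def dcl (I : Ideal R) : Ideal R := sInf {J : Ideal R | IsDeltaIdeal Δ J ∧ I ≤ J}

lemma le_dcl (I : Ideal R) : I ≤ dcl Δ I := le_sInf fun _ hJ => hJ.2

lemma dcl_le {I J : Ideal R} (h1 : IsDeltaIdeal Δ J) (h2 : I ≤ J) : dcl Δ I ≤ J :=
  sInf_le ⟨h1, h2⟩

lemma dcl_delta (I : Ideal R) : IsDeltaIdeal Δ (dcl Δ I) :=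
  sInf_delta Δ fun _ hJ => hJ.1

lemma core_mem_iff {I M : Ideal R} : I ≤ deltaCore Δ M ↔ dcl Δ I ≤ M := by
  constructor
  · intro h
    exact (dcl_le Δ (deltaCore_delta Δ M) h).trans (deltaCore_le Δ M)
  · intro h
    exact (le_dcl Δ I).trans (le_deltaCore Δ (dcl_delta Δ I) h)

/-- The ideal `{y | a * y ∈ Q}`. -/
def colonElem (Q : Ideal R) (a : R) : Ideal R where
  carrier := {y | a * y ∈ Q}
  zero_mem' := by simp
  add_mem' := by
    intro x y hx hy
    simp only [Set.mem_setOf_eq, mul_add] at *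
    exact Q.add_mem hx hy
  smul_mem' := by
    intro c x hx
    simp only [Set.mem_setOf_eq, smul_eq_mul] at *
    have : a * (c * x) = c * (a * x) := by ring
    rw [this]
    exact Q.mul_mem_left c hx

lemma mem_colonElem {Q : Ideal R} {a y : R} : y ∈ colonElem Q a ↔ a * y ∈ Q := Iff.rfl

/-- The ideal `{x | ∀ y ∈ J, x * y ∈ Q}`. -/
def colonIdeal (Q J : Ideal R) : Ideal R where
  carrier := {x | ∀ y ∈ J, x * y ∈ Q}
  zero_mem' := by
    intro y _
    rw [zero_mul]
    exact Q.zero_mem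
  add_mem' := by
    intro x x' hx hx' y hy
    rw [add_mul]
    exact Q.add_mem (hx y hy) (hx' y hy)
  smul_mem' := by
    intro c x hx y hy
    rw [smul_eq_mul, mul_assoc]
    exact Q.mul_mem_left c (hx y hy)

lemma mem_colonIdeal {Q J : Ideal R} {x : R} :
    x ∈ colonIdeal Q J ↔ ∀ y ∈ J, x * y ∈ Q := Iff.rfl

end DeltaAux

end Aux

section Aux2

open DeltaAux

variable {k R : Type*} [Field k] [CharZero k] [CommRing R] [Algebra k R]
variable (Δ : Set (Derivation k R R))

namespace DeltaAux2

/-- In an algebra over a field of characteristic zero we can cancel nonzero natural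
numbers. -/
lemma kill_nat (k : Type*) [Field k] [CharZero k] [Algebra k R]
    {I : Ideal R} {n : ℕ} (hn : n ≠ 0) {y : R} (h : n • y ∈ I) : y ∈ I := by
  rw [nsmul_eq_mul] at h
  have h1 : algebraMap k R ((n : k)⁻¹) * ((n : R) * y) ∈ I := I.mul_mem_left _ h
  have h2 : algebraMap k R ((n : k)⁻¹) * (n : R) = 1 := by
    rw [← map_natCast (algebraMap k R) n, ← map_mul,
      inv_mul_cancel₀ (Nat.cast_ne_zero.mpr hn), map_one]
  rwa [← mul_assoc, h2, one_mul] at h1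

/-- The radical of a `Δ`-ideal is a `Δ`-ideal (characteristic zero). -/
lemma rad_delta {I : Ideal R} (hI : IsDeltaIdeal Δ I) : IsDeltaIdeal Δ I.radical := by
  intro δ hδ x hx
  obtain ⟨n, hn⟩ := Ideal.mem_radical_iff.1 hx
  cases n with
  | zero =>
    rw [pow_zero] at hn
    have htop : I = ⊤ := (Ideal.eq_top_iff_one I).2 hn
    rw [htop, Ideal.radical_top]
    trivial
  | succ e =>
    have main : ∀ m : ℕ, m ≤ e → x ^ (e - m) * (δ x) ^ (2 * m + 1) ∈ I := by
      intro m
      induction m with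
      | zero =>
        intro _
        have h0 : δ (x ^ (e + 1)) ∈ I := hI δ hδ _ hn
        rw [Derivation.leibniz_pow] at h0
        simp only [Nat.add_sub_cancel, smul_eq_mul] at h0
        have h1 := kill_nat k (Nat.succ_ne_zero e) h0
        simpa using h1
      | succ m ih =>
        intro hme
        have hm : m ≤ e := by omega
        have huv := ih hm
        obtain ⟨b, hb⟩ : ∃ b, e - m = b + 1 := ⟨e - m - 1, by omega⟩
        rw [hb] at huv
        have heq : (b + 1) • (x ^ b * (δ x) ^ (2 * m + 3)) =
            δ x * δ (x ^ (b + 1) * (δ x) ^ (2 * m + 1)) -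
              (2 * m + 1) • ((x ^ (b + 1) * (δ x) ^ (2 * m + 1)) * δ (δ x)) := by
          rw [Derivation.leibniz, Derivation.leibniz_pow, Derivation.leibniz_pow]
          simp only [Nat.add_sub_cancel, smul_eq_mul, nsmul_eq_mul]
          push_cast
          ring
        have h2 : (b + 1) • (x ^ b * (δ x) ^ (2 * m + 3)) ∈ I := by
          rw [heq]
          refine I.sub_mem (I.mul_mem_left _ (hI δ hδ _ huv)) ?_
          rw [nsmul_eq_mul]
          exact I.mul_mem_left _ (I.mul_mem_right _ huv)
        have h3 := kill_nat k (Nat.succ_ne_zero b) h2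
        have he1 : e - (m + 1) = b := by omega
        have he2 : 2 * (m + 1) + 1 = 2 * m + 3 := by omega
        rw [he1, he2]
        exact h3
    have hfin := main e le_rfl
    rw [Nat.sub_self, pow_zero, one_mul] at hfin
    exact Ideal.mem_radical_iff.2 ⟨2 * e + 1, hfin⟩

lemma pow_le_of_deltaPrime {Q A : Ideal R} (hQ : IsDeltaPrime Δ Q)
    (hA : IsDeltaIdeal Δ A) {n : ℕ} (h : A ^ n ≤ Q) : A ≤ Q := by
  induction n with
  | zero =>
    rw [pow_zero, Ideal.one_eq_top] at h
    exact (hQ.1 (top_le_iff.1 h)).elim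
  | succ n ih =>
    rw [pow_succ] at h
    rcases hQ.2.2 (A ^ n) A (pow_delta Δ hA n) hA h with h' | h'
    · exact ih h'
    · exact h'

lemma deltaPrime_radical [IsNoetherianRing R] {Q : Ideal R} (hQ : IsDeltaPrime Δ Q) :
    Q.radical = Q := by
  obtain ⟨n, hn⟩ := Ideal.exists_radical_pow_le_of_fg Q (IsNoetherian.noetherian _)
  exact le_antisymm (pow_le_of_deltaPrime Δ hQ (rad_delta Δ hQ.2.1) hn) Ideal.le_radical

lemma step_mul {Q : Ideal R} (hrad : Q.radical = Q) (hQ : IsDeltaIdeal Δ Q)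
    {δ : Derivation k R R} (hδ : δ ∈ Δ) {x y : R} (h : x * y ∈ Q) : x * δ y ∈ Q := by
  have h1 : δ (x * y) ∈ Q := hQ δ hδ _ h
  rw [Derivation.leibniz, smul_eq_mul, smul_eq_mul] at h1
  have h2 : (x * δ y) ^ 2 = (x * δ y) * (x * δ y + y * δ x) - (x * y) * (δ x * δ y) := by
    ring
  have h3 : (x * δ y) ^ 2 ∈ Q := by
    rw [h2]
    exact Q.sub_mem (Q.mul_mem_left _ h1) (Q.mul_mem_right _ h)
  have h4 : x * δ y ∈ Q.radical := Ideal.mem_radical_iff.2 ⟨2, h3⟩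
  rwa [hrad] at h4

/-- In characteristic zero (Noetherian case), `Δ`-prime ideals are prime. -/
lemma isPrime_of_deltaPrime [IsNoetherianRing R] {Q : Ideal R}
    (hQ : IsDeltaPrime Δ Q) : Q.IsPrime := by
  have hrad := deltaPrime_radical Δ hQ
  refine ⟨hQ.1, ?_⟩
  intro a b hab
  have hCa : IsDeltaIdeal Δ (colonElem Q a) := by
    intro δ hδ y hy
    exact step_mul Δ hrad hQ.2.1 hδ (mem_colonElem.1 hy)
  have hbB : Ideal.span {b} ≤ colonElem Q a := by
    rw [Ideal.span_le, Set.singleton_subset_iff]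
    exact mem_colonElem.2 hab
  set B := dcl Δ (Ideal.span {b}) with hBdef
  have hBdelta : IsDeltaIdeal Δ B := dcl_delta Δ _
  have hB_le : B ≤ colonElem Q a := dcl_le Δ hCa hbB
  have hA : IsDeltaIdeal Δ (colonIdeal Q B) := by
    intro δ hδ x hx y hy
    have h1 : δ (x * y) ∈ Q := hQ.2.1 δ hδ _ (mem_colonIdeal.1 hx y hy)
    have h2 : x * δ y ∈ Q := mem_colonIdeal.1 hx _ (hBdelta δ hδ y hy)
    have h3 : δ x * y = δ (x * y) - x * δ y := by
      rw [Derivation.leibniz, smul_eq_mul, smul_eq_mul]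
      ring
    rw [h3]
    exact Q.sub_mem h1 h2
  have haA : Ideal.span {a} ≤ colonIdeal Q B := by
    rw [Ideal.span_le, Set.singleton_subset_iff]
    exact mem_colonIdeal.2 fun y hy => mem_colonElem.1 (hB_le hy)
  set A := dcl Δ (Ideal.span {a}) with hAdef
  have hA_le : A ≤ colonIdeal Q B := dcl_le Δ hA haA
  have hprod : A * B ≤ Q :=
    Ideal.mul_le.2 fun r hr s hs => mem_colonIdeal.1 (hA_le hr) s hs
  rcases hQ.2.2 A B (dcl_delta Δ _) hBdelta hprod with h | h
  · exact Or.inl (h (le_dcl Δ _ (Ideal.subset_span rfl)))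
  · exact Or.inr (h (le_dcl Δ _ (Ideal.subset_span rfl)))

lemma eq_sInf_max [IsJacobsonRing R] {Q : Ideal R} (hrad : Q.radical = Q) :
    Q = sInf {M : Ideal R | Q ≤ M ∧ M.IsMaximal} := by
  conv_lhs => rw [← hrad]
  rw [Ideal.radical_eq_jacobson]
  rfl

end DeltaAux2

end Aux2

open DeltaAux DeltaAux2 in
/-- For `R` an affine `k`-algebra, `π_m(M) = (M:Δ)` defines a continuous
surjection `π_m : max R → Δ-prim R` (closed sets of `max R`, resp. `Δ-prim R`, are the
sets of maximal, resp. `Δ`-primitive, ideals containing a fixed ideal).  If moreover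
every `Δ`-primitive ideal of `R` is a locally closed point of `Δ-spec R`, then the
Zariski topology on `Δ-prim R` is the quotient topology induced by `π_m`:
`W ⊆ Δ-prim R` is closed iff `π_m⁻¹(W)` is closed in `max R`. -/
theorem deltaPrim_quotient_topology_of_locallyClosed
    {k R : Type*} [Field k] [CharZero k] [CommRing R] [Algebra k R]
    [Algebra.FiniteType k R]
    (Δ : Set (Derivation k R R)) :
    -- π_m maps max R onto Δ-prim R
    (∀ M : Ideal R, M.IsMaximal → IsDeltaPrimitive Δ (deltaCore Δ M)) ∧
    (∀ P : Ideal R, IsDeltaPrimitive Δ P → ∃ M : Ideal R, M.IsMaximal ∧ deltaCore Δ M = P) ∧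
    -- π_m is continuous
    (∀ I : Ideal R, ∃ I' : Ideal R,
      {M : Ideal R | M.IsMaximal ∧ I ≤ deltaCore Δ M} =
        {M : Ideal R | M.IsMaximal ∧ I' ≤ M}) ∧
    -- if every Δ-primitive ideal is locally closed in Δ-spec R, the topology on
    -- Δ-prim R is the quotient topology induced by π_m
    ((∀ P : Ideal R, IsDeltaPrimitive Δ P →
        ∃ I : Ideal R, {Q : Ideal R | IsDeltaPrime Δ Q ∧ P ≤ Q ∧ ¬ I ≤ Q} = {P}) →
      ∀ W : Set (Ideal R), W ⊆ {P : Ideal R | IsDeltaPrimitive Δ P} →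
        ((∃ I : Ideal R, W = {P : Ideal R | IsDeltaPrimitive Δ P ∧ I ≤ P}) ↔
          (∃ I : Ideal R,
            {M : Ideal R | M.IsMaximal ∧ deltaCore Δ M ∈ W} =
              {M : Ideal R | M.IsMaximal ∧ I ≤ M}))) := by
  haveI : IsNoetherianRing R := Algebra.FiniteType.isNoetherianRing k R
  haveI : IsJacobsonRing R := isJacobsonRing_of_finiteType (A := k) (B := R)
  refine ⟨fun M hM => ⟨M, hM, rfl⟩, fun P hP => hP, fun I => ⟨dcl Δ I, ?_⟩, ?_⟩
  · ext M
    simp only [Set.mem_setOf_eq]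
    exact and_congr_right fun _ => core_mem_iff Δ
  · intro hH W hW
    -- every Δ-primitive ideal is Δ-prime
    have primDP : ∀ P : Ideal R, IsDeltaPrimitive Δ P → IsDeltaPrime Δ P := by
      intro P hP
      obtain ⟨I₀, h₀⟩ := hH P hP
      have hmem : P ∈ ({P} : Set (Ideal R)) := rfl
      rw [← h₀] at hmem
      exact hmem.1
    constructor
    · -- forward: W closed in Δ-prim ⟹ preimage closed in max R
      rintro ⟨I, rfl⟩
      refine ⟨dcl Δ I, ?_⟩
      ext M
      simp only [Set.mem_setOf_eq]
      constructor
      · rintro ⟨hM, _, hIle⟩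
        exact ⟨hM, (core_mem_iff Δ).1 hIle⟩
      · rintro ⟨hM, h⟩
        exact ⟨hM, ⟨M, hM, rfl⟩, (core_mem_iff Δ).2 h⟩
    · -- backward: preimage closed ⟹ W closed in Δ-prim
      rintro ⟨I, hI⟩
      -- Key lemma: every element of W contains I
      have KL : ∀ Q ∈ W, I ≤ Q := by
        intro Q hQW
        have hQprim : IsDeltaPrimitive Δ Q := hW hQW
        obtain ⟨IQ, hIQ⟩ := hH Q hQprim
        have hQself : IsDeltaPrime Δ Q ∧ Q ≤ Q ∧ ¬ IQ ≤ Q := by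
          have hmem : Q ∈ ({Q} : Set (Ideal R)) := rfl
          rw [← hIQ] at hmem
          exact hmem
        have hQdp := hQself.1
        have hQrad := deltaPrime_radical Δ hQdp
        have hQprime := isPrime_of_deltaPrime Δ hQdp
        have hmul : I * IQ ≤ Q := by
          rw [eq_sInf_max hQrad]
          refine le_sInf ?_
          rintro M ⟨hQM, hMmax⟩
          by_cases hcase : IQ ≤ M
          · exact le_trans Ideal.mul_le_right hcase
          · have hcoreQ : deltaCore Δ M = Q := by
              have hmem : deltaCore Δ M ∈
                  {Q' : Ideal R | IsDeltaPrime Δ Q' ∧ Q ≤ Q' ∧ ¬ IQ ≤ Q'} :=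
                ⟨primDP _ ⟨M, hMmax, rfl⟩, le_deltaCore Δ hQdp.2.1 hQM,
                  fun hc => hcase (hc.trans (deltaCore_le Δ M))⟩
              rw [hIQ] at hmem
              exact hmem
            have hMin : M ∈ {M : Ideal R | M.IsMaximal ∧ deltaCore Δ M ∈ W} :=
              ⟨hMmax, by rw [hcoreQ]; exact hQW⟩
            rw [hI] at hMin
            exact le_trans Ideal.mul_le_left hMin.2
        rcases (Ideal.IsPrime.mul_le hQprime).1 hmul with h | h
        · exact h
        · exact absurd h hQself.2.2
      refine ⟨dcl Δ I, ?_⟩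
      ext P
      simp only [Set.mem_setOf_eq]
      constructor
      · intro hPW
        have hprim := hW hPW
        have hdp := primDP P hprim
        exact ⟨hprim, dcl_le Δ hdp.2.1 (KL P hPW)⟩
      · rintro ⟨hprim, hle⟩
        obtain ⟨IP, hIP⟩ := hH P hprim
        have hPself : IsDeltaPrime Δ P ∧ P ≤ P ∧ ¬ IP ≤ P := by
          have hmem : P ∈ ({P} : Set (Ideal R)) := rfl
          rw [← hIP] at hmem
          exact hmem
        have hPrad := deltaPrime_radical Δ hPself.1
        have hns : ¬ IP ≤ sInf {M : Ideal R | P ≤ M ∧ M.IsMaximal} := by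
          rw [← eq_sInf_max hPrad]
          exact hPself.2.2
        have hex : ∃ M ∈ {M : Ideal R | P ≤ M ∧ M.IsMaximal}, ¬ IP ≤ M := by
          by_contra hcon
          push_neg at hcon
          exact hns (le_sInf hcon)
        obtain ⟨M, ⟨hPM, hMmax⟩, hIPM⟩ := hex
        have hcoreP : deltaCore Δ M = P := by
          have hmem : deltaCore Δ M ∈
              {Q : Ideal R | IsDeltaPrime Δ Q ∧ P ≤ Q ∧ ¬ IP ≤ Q} :=
            ⟨primDP _ ⟨M, hMmax, rfl⟩, le_deltaCore Δ hPself.1.2.1 hPM,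
              fun hc => hIPM (hc.trans (deltaCore_le Δ M))⟩
          rw [hIP] at hmem
          exact hmem
        have hMin : M ∈ {M : Ideal R | M.IsMaximal ∧ I ≤ M} :=
          ⟨hMmax, le_trans (le_trans (le_dcl Δ I) hle) hPM⟩
        rw [← hI] at hMin
        rw [← hcoreP]
        exact hMin.2
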